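/- Let p be a prime and q a power of p. For every monic separable additive polynomial A over an algebraically closed field of characteristic p whose set of roots is contained in the finite field F_q, there exists a monic separable additive polynomial B such that the composition A ∘ B equals the polynomial x^q - x. -/

import Mathlib

open Polynomial

private lemma aux_val_le_roots {k : Type} [Field k] (f : k[X]) (hf : f ≠ 0)
    (s : Finset k) (hroot : ∀ c ∈ s, f.eval c = 0) : s.val ≤ f.roots := by
  classical
  rw [Multiset.le_iff_count]
  intro a
  by_cases ha : a ∈ s
  · rw [Multiset.count_eq_one_of_mem s.nodup ha]
    exact (Multiset.count_pos).mpr ((mem_roots hf).mpr (hroot a ha))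
  · rw [Multiset.count_eq_zero_of_notMem (by simpa using ha)]
    exact Nat.zero_le _

private lemma aux_eq_prod {k : Type} [Field k] [IsAlgClosed k] (f : k[X]) (hf : f.Monic)
    (s : Finset k) (hcard : f.natDegree = s.card) (hroot : ∀ c ∈ s, f.eval c = 0) :
    f = ∏ c ∈ s, (X - C c) := by
  classical
  have hne : f ≠ 0 := hf.ne_zero
  have hle : s.val ≤ f.roots := aux_val_le_roots f hne s hroot
  have hcr : Multiset.card f.roots ≤ Multiset.card s.val := by
    simpa [← hcard] using f.card_roots'
  have heq : s.val = f.roots := Multiset.eq_of_le_of_card_le hle hcr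
  have h2 := (IsAlgClosed.splits f).eq_prod_roots_of_monic hf
  rw [h2, ← heq, Finset.prod_eq_multiset_prod]


/-- Let `p` be a prime and `q = p^ν` a power of `p`. For every monic separable additive
polynomial `A` over an algebraically closed field `k` of characteristic `p` whose set of
roots is contained in the finite field `F_q ⊆ k` (i.e. every root `x` satisfies `x^q = x`),
there exists a monic separable additive polynomial `B` with `A ∘ B = X^q − X`. -/
theorem stmt0 (p : ℕ) (hp : p.Prime) (ν : ℕ) (hν : 0 < ν) (q : ℕ) (hq : q = p ^ ν)
    (k : Type) [Field k] [IsAlgClosed k] [CharP k p]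
    (A : Polynomial k) (hmonic : A.Monic) (hsep : A.Separable)
    (hadd : ∀ x y : k, A.eval (x + y) = A.eval x + A.eval y)
    (hroots : ∀ x : k, A.eval x = 0 → x ^ q = x) :
    ∃ B : Polynomial k, B.Monic ∧ B.Separable ∧
      (∀ x y : k, B.eval (x + y) = B.eval x + B.eval y) ∧
      A.comp B = X ^ q - X := by
  classical
  haveI := Fact.mk hp
  have hq1 : 1 < q := by rw [hq]; exact Nat.one_lt_pow hν.ne' hp.one_lt
  have hq0 : 0 < q := by omega
  -- freshman's dream
  have hfrob : ∀ x y : k, (x + y) ^ q = x ^ q + y ^ q := by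
    intro x y; rw [hq]; exact add_pow_char_pow ..
  -- basic additivity facts
  have hA0 : A.eval 0 = 0 := by
    have h := hadd 0 0; rw [add_zero] at h; exact (left_eq_add.mp h)
  have hneg : ∀ x : k, A.eval (-x) = -A.eval x := by
    intro x
    have h := hadd x (-x); rw [add_neg_cancel, hA0] at h
    linear_combination -h
  have hsub : ∀ x y : k, A.eval (x - y) = A.eval x - A.eval y := by
    intro x y; rw [sub_eq_add_neg, hadd, hneg, sub_eq_add_neg]
  have hAne : A ≠ 0 := hmonic.ne_zero
  have hAdeg1 : 1 ≤ A.natDegree := by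
    by_contra h
    push_neg at h
    have h0 : A.natDegree = 0 := by omega
    have : A = 1 := hmonic.natDegree_eq_zero.mp h0
    rw [this] at hA0
    simp at hA0
  -- the polynomial P = X^q - X
  set P : k[X] := X ^ q - X with hPdef
  have hPmonic : P.Monic := by
    apply monic_X_pow_sub
    rw [degree_X]
    exact_mod_cast hq1
  have hPdeg : P.natDegree = q := FiniteField.X_pow_card_sub_X_natDegree_eq k hq1
  have hPne : P ≠ 0 := hPmonic.ne_zero
  have hPsep : P.Separable := galois_poly_separable p q (hq ▸ dvd_pow_self p hν.ne')
  have hPeval : ∀ x : k, P.eval x = x ^ q - x := by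
    intro x; simp [hPdef]
  have hProots_card : Multiset.card P.roots = q := by
    rw [← hPdeg]
    exact (splits_iff_card_roots.mp (IsAlgClosed.splits P))
  have hPnodup : P.roots.Nodup := nodup_roots hPsep
  set Fq : Finset k := P.roots.toFinset with hFqdef
  have hFqcard : Fq.card = q := by
    rw [hFqdef, Multiset.toFinset_card_of_nodup hPnodup, hProots_card]
  have hFqmem : ∀ x : k, x ∈ Fq ↔ x ^ q = x := by
    intro x
    rw [hFqdef, Multiset.mem_toFinset, mem_roots hPne]
    unfold IsRoot
    rw [hPeval, sub_eq_zero]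
  -- roots of A
  have hGnodup : A.roots.Nodup := nodup_roots hsep
  set G : Finset k := A.roots.toFinset with hGdef
  have hGcard : G.card = A.natDegree := by
    rw [hGdef, Multiset.toFinset_card_of_nodup hGnodup]
    exact splits_iff_card_roots.mp (IsAlgClosed.splits A)
  have hGmem : ∀ x : k, x ∈ G ↔ A.eval x = 0 := by
    intro x; rw [hGdef, Multiset.mem_toFinset, mem_roots hAne]; rfl
  -- the image H = A(F_q)
  set H : Finset k := Fq.image (fun c => A.eval c) with hHdef
  have h0Fq : (0 : k) ∈ Fq := (hFqmem 0).mpr (zero_pow hq0.ne')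
  have h0H : (0 : k) ∈ H := Finset.mem_image.mpr ⟨0, h0Fq, hA0⟩
  -- the polynomial B
  set Bp : k[X] := ∏ h ∈ H, (X - C h) with hBdef
  have hBmonic : Bp.Monic := monic_prod_of_monic _ _ (fun h _ => monic_X_sub_C h)
  have hBdeg : Bp.natDegree = H.card := by
    rw [hBdef, natDegree_prod _ _ (fun h _ => X_sub_C_ne_zero h)]
    simp
  have hBsep : Bp.Separable := by
    rw [hBdef]
    exact separable_prod_X_sub_C_iff'.mpr (fun x _ y _ h => h)
  have hBeval0 : Bp.eval 0 = 0 := by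
    rw [hBdef, eval_prod]
    exact Finset.prod_eq_zero h0H (by simp)
  -- evaluation of B ∘ A at elements of Fq
  have hBAeval : ∀ c ∈ Fq, (Bp.comp A).eval c = 0 := by
    intro c hc
    rw [eval_comp, hBdef, eval_prod]
    exact Finset.prod_eq_zero (Finset.mem_image_of_mem _ hc) (by simp)
  have hBAmonic : (Bp.comp A).Monic := hBmonic.comp hmonic (by omega)
  -- degree counting
  have hcount : H.card * A.natDegree ≤ q := by
    have h1 : Fq.card = ∑ h ∈ H, (Fq.filter (fun c => A.eval c = h)).card :=
      Finset.card_eq_sum_card_fiberwise (fun c hc => Finset.mem_image_of_mem _ hc)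
    have h2 : ∀ h ∈ H, A.natDegree ≤ (Fq.filter (fun c => A.eval c = h)).card := by
      intro h hh
      obtain ⟨c0, hc0, rfl⟩ := Finset.mem_image.mp hh
      rw [← hGcard]
      apply Finset.card_le_card_of_injOn (fun g => c0 + g)
      · intro g hg
        have hgroot : A.eval g = 0 := (hGmem g).mp hg
        rw [Finset.mem_coe, Finset.mem_filter]
        constructor
        · rw [hFqmem, hfrob, (hFqmem c0).mp hc0, hroots g hgroot]
        · rw [hadd, hgroot, add_zero]
      · intro a _ b _ hab
        exact add_left_cancel hab
    calc H.card * A.natDegree = H.card • A.natDegree := by rw [smul_eq_mul]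
      _ ≤ ∑ h ∈ H, (Fq.filter (fun c => A.eval c = h)).card := Finset.card_nsmul_le_sum _ _ _ h2
      _ = Fq.card := h1.symm
      _ = q := hFqcard
  have hBAdeg : (Bp.comp A).natDegree = q := by
    have hle : Fq.val ≤ (Bp.comp A).roots := aux_val_le_roots _ hBAmonic.ne_zero _ hBAeval
    have h2 : q ≤ (Bp.comp A).natDegree := by
      calc q = Fq.card := hFqcard.symm
        _ = Multiset.card Fq.val := rfl
        _ ≤ Multiset.card (Bp.comp A).roots := Multiset.card_le_card hle
        _ ≤ _ := card_roots' _
    have h3 : (Bp.comp A).natDegree ≤ q := by rw [natDegree_comp, hBdeg]; exact hcount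
    omega
  -- B ∘ A = P
  have hBA : Bp.comp A = P := by
    rw [aux_eq_prod (Bp.comp A) hBAmonic Fq (by rw [hBAdeg, hFqcard]) hBAeval]
    rw [aux_eq_prod P hPmonic Fq (by rw [hPdeg, hFqcard]) (fun c hc => by
      rw [hPeval, sub_eq_zero]; exact (hFqmem c).mp hc)]
  -- Frobenius fixes A
  set φ : k →+* k := iterateFrobenius k p ν with hφdef
  have hφ : ∀ x : k, φ x = x ^ q := by
    intro x; rw [hφdef, iterateFrobenius_def, ← hq]
  have hAmap : A.map φ = A := by
    have hsp := (IsAlgClosed.splits A).eq_prod_roots_of_monic hmonic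
    conv_lhs => rw [hsp]
    conv_rhs => rw [hsp]
    rw [Polynomial.map_multiset_prod, Multiset.map_map]
    congr 1
    apply Multiset.map_congr rfl
    intro a ha
    have haroot : A.eval a = 0 := (hGmem a).mp (Multiset.mem_toFinset.mpr ha)
    simp only [Function.comp_apply, Polynomial.map_sub, map_X, map_C]
    rw [hφ, hroots a haroot]
  have hfrobA : ∀ x : k, A.eval (x ^ q) = (A.eval x) ^ q := by
    intro x
    have h := eval₂_at_apply (p := A) φ x
    rw [← eval_map, hAmap] at h
    rw [← hφ x, h, hφ]
  -- A ∘ P = P ∘ A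
  have hcomm : A.comp P = P.comp A := by
    apply Polynomial.funext
    intro x
    rw [eval_comp, eval_comp, hPeval, hPeval, hsub, hfrobA]
  -- A ∘ B = P
  have hAB : A.comp Bp = P := by
    have h1 : (A.comp Bp - P).comp A = 0 := by
      rw [sub_comp, comp_assoc, hBA, hcomm, sub_self]
    rcases comp_eq_zero_iff.mp h1 with h | ⟨_, h⟩
    · exact sub_eq_zero.mp h
    · exfalso
      rw [h] at hAdeg1
      simp at hAdeg1
  -- additivity of B
  have hABeval : ∀ w : k, A.eval (Bp.eval w) = w ^ q - w := by
    intro w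
    have := congrArg (eval w) hAB
    rwa [eval_comp, hPeval] at this
  have hBadd : ∀ x y : k, Bp.eval (x + y) = Bp.eval x + Bp.eval y := by
    intro x y
    set D : k[X] := Bp.comp (X + C y) - Bp - C (Bp.eval y) with hDdef
    have hDeval : ∀ z : k, D.eval z = Bp.eval (z + y) - Bp.eval z - Bp.eval y := by
      intro z; simp [hDdef, eval_comp]
    have hADzero : A.comp D = 0 := by
      apply Polynomial.funext
      intro z
      rw [eval_comp, hDeval, hsub, hsub, hABeval, hABeval, hABeval, eval_zero, hfrob]
      ring
    rcases comp_eq_zero_iff.mp hADzero with h | ⟨hc, hD⟩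
    · exact absurd h hAne
    · have h0 : D.coeff 0 = 0 := by
        have := congrArg (eval 0) hD
        rw [eval_C, hDeval 0, zero_add, hBeval0, sub_zero, sub_self] at this
        exact this.symm
      rw [h0, map_zero] at hD
      have := congrArg (eval x) hD
      rw [hDeval x, eval_zero] at this
      linear_combination this
  exact ⟨Bp, hBmonic, hBsep, hBadd, hAB⟩
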